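/- Let (M,g) be a 4-dimensional Riemannian manifold whose Ricci tensor ρ satisfies ∇_X ρ (Y,Z) = (2/9) X(s) g(Y,Z) + (1/18) Y(s) g(X,Z) + (1/18) Z(s) g(X,Y) for all vector fields X,Y,Z, where s is the scalar curvature. Then for any orthonormal vectors X,Y,Z,U in a tangent space, (ρ(Y,Y)−ρ(Z,Z))·(∇_X ρ)(Y,Z) + ((∇_X ρ)(Z,Z)−(∇_X ρ)(Y,Y))·ρ(Y,Z) + ρ(Y,U)(∇_X ρ)(Z,U) − ρ(Z,U)(∇_X ρ)(Y,U) = 0. -/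
import Mathlib


open scoped RealInnerProductSpace

/-- pointwise form. On a 4-dimensional inner product (tangent) space,
if the covariant derivative `Dρ` of the Ricci tensor `ρ` satisfies the Q-space identity
`(∇_X ρ)(Y,Z) = (2/9) X(s) g(Y,Z) + (1/18) Y(s) g(X,Z) + (1/18) Z(s) g(X,Y)`
(where `Ds` is the differential of the scalar curvature), then for any orthonormal
vectors X, Y, Z, U the P-space commutation identity holds. -/
theorem stmt0
    (ρ : EuclideanSpace ℝ (Fin 4) → EuclideanSpace ℝ (Fin 4) → ℝ)
    (Dρ : EuclideanSpace ℝ (Fin 4) → EuclideanSpace ℝ (Fin 4) → EuclideanSpace ℝ (Fin 4) → ℝ)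
    (Ds : EuclideanSpace ℝ (Fin 4) → ℝ)
    (h : ∀ X Y Z, Dρ X Y Z =
      (2/9) * Ds X * ⟪Y, Z⟫ + (1/18) * Ds Y * ⟪X, Z⟫ + (1/18) * Ds Z * ⟪X, Y⟫)
    (X Y Z U : EuclideanSpace ℝ (Fin 4))
    (hXX : ⟪X, X⟫ = 1) (hYY : ⟪Y, Y⟫ = 1) (hZZ : ⟪Z, Z⟫ = 1) (hUU : ⟪U, U⟫ = 1)
    (hXY : ⟪X, Y⟫ = 0) (hXZ : ⟪X, Z⟫ = 0) (hXU : ⟪X, U⟫ = 0)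
    (hYZ : ⟪Y, Z⟫ = 0) (hYU : ⟪Y, U⟫ = 0) (hZU : ⟪Z, U⟫ = 0) :
    (ρ Y Y - ρ Z Z) * Dρ X Y Z + (Dρ X Z Z - Dρ X Y Y) * ρ Y Z
      + ρ Y U * Dρ X Z U - ρ Z U * Dρ X Y U = 0 := by
  simp only [h, hXX, hYY, hZZ, hUU, hXY, hXZ, hXU, hYZ, hYU, hZU]
  ring
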